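/- (Convergence of stochastic proximal-gradient variational inference with varying step sizes.) Let E be a finite-dimensional real inner product space with its Borel σ-algebra, S ⊆ E convex, and (Ω, P) a probability space. Let f : E → ℝ be differentiable with L-Lipschitz gradient (L > 0), h : E → ℝ convex on S, α > 0, c > 1/(2α), α* := α − 1/(2c), σ ≥ 0, t ≥ 1, and let β₀, …, β_{t−1} ∈ ℝ and M₀, …, M_{t−1} > 0 satisfy 0 < β_k ≤ 2α*/L for all k < t, with β_k < 2α*/L for at least one k < t. Let λ₀ ∈ S be fixed, and let λ₁, …, λ_t : Ω → E and g₀, …, g_{t−1} : Ω → E be measurable maps such that for P-almost every ω and every k < t: λ_{k+1}(ω) ∈ S minimizes λ ↦ ⟨λ, g_k(ω)⟩ + h(λ) + (1/β_k)·D(λ, λ_k(ω)) over S, h is differentiable at λ_{k+1}(ω), the map λ ↦ D(λ, λ_k(ω)) is differentiable at λ_{k+1}(ω), and ⟨λ_{k+1}(ω) − λ_k(ω), ∇₁D(λ_{k+1}(ω), λ_k(ω))⟩ ≥ α·‖λ_{k+1}(ω) − λ_k(ω)‖². Set δ_k := g_k − ∇f(λ_k) and G_k := (λ_k − λ_{k+1})/β_k,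 and assume ‖δ_k‖² and ‖G_k‖² are integrable with E[‖δ_k‖²] ≤ σ²/M_k for every k < t. Suppose 𝓛* ∈ ℝ satisfies −(f(λ) + h(λ)) ≤ 𝓛* for all λ ∈ S, and set C₀ := 𝓛* + f(λ₀) + h(λ₀). Then Σ_{k=0}^{t−1} (α*·β_k − (L/2)·β_k²)·E[‖G_k‖²] ≤ C₀ + (c·σ²/2)·Σ_{k=0}^{t−1} β_k/M_k. -/

import Mathlib

open scoped RealInnerProductSpace
open MeasureTheory

theorem slope_le_aux (ψ : ℝ → ℝ) (d r : ℝ) (hd : HasDerivAt ψ d 0)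
    (hb : ∀ τ ∈ Set.Ioc (0:ℝ) 1, (ψ τ - ψ 0) / τ ≤ r) : d ≤ r := by
  have h1 := hasDerivAt_iff_tendsto_slope.1 hd
  have h2 : Filter.Tendsto (slope ψ 0) (nhdsWithin 0 (Set.Ioi 0)) (nhds d) :=
    h1.mono_left (nhdsWithin_mono _ (fun x hx => ne_of_gt hx))
  refine le_of_tendsto h2 ?_
  filter_upwards [Ioc_mem_nhdsGT_of_mem (by norm_num : (0:ℝ) ∈ Set.Ico (0:ℝ) 1)] with τ hτ
  simpa [slope_def_field, div_eq_iff] using hb τ hτ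

theorem curve_hasDerivAt {E : Type*} [NormedAddCommGroup E] [InnerProductSpace ℝ E]
    (z v : E) (s : ℝ) : HasDerivAt (fun τ : ℝ => z + τ • v) v s := by
  simpa using ((hasDerivAt_id s).smul_const v).const_add z

theorem comp_grad_hasDerivAt {E : Type*} [NormedAddCommGroup E] [InnerProductSpace ℝ E]
    [CompleteSpace E] (φ : E → ℝ) (z v : E) (hd : DifferentiableAt ℝ φ z) :
    HasDerivAt (fun τ : ℝ => φ (z + τ • v)) ⟪gradient φ z, v⟫ 0 := by
  have h0 : z + (0:ℝ) • v = z := by simp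
  have hfd : HasFDerivAt φ (InnerProductSpace.toDual ℝ E (gradient φ z)) (z + (0:ℝ) • v) := by
    rw [h0]; exact hd.hasGradientAt.hasFDerivAt
  have := hfd.comp_hasDerivAt 0 (curve_hasDerivAt z v 0)
  simp only [InnerProductSpace.toDual_apply_apply] at this
  exact this

theorem convex_grad_ineq {E : Type*} [NormedAddCommGroup E] [InnerProductSpace ℝ E]
    [CompleteSpace E] {S : Set E} (h : E → ℝ) (hconv : ConvexOn ℝ S h) (x z : E)
    (hx : x ∈ S) (hz : z ∈ S) (hdh : DifferentiableAt ℝ h z) :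
    ⟪gradient h z, x - z⟫ ≤ h x - h z := by
  set v := x - z with hv
  have hline : ∀ τ : ℝ, z + τ • v = (1 - τ) • z + τ • x := by
    intro τ; rw [hv]; rw [smul_sub, sub_smul, one_smul]; abel
  refine slope_le_aux _ _ _ (comp_grad_hasDerivAt h z v hdh) ?_
  intro τ hτ
  rw [div_le_iff₀ hτ.1]
  have hmem := hconv.2 hz hx (by linarith [hτ.2] : (0:ℝ) ≤ 1 - τ) hτ.1.le (by ring)
  rw [← hline τ] at hmem
  simp only [smul_eq_mul] at hmem
  have h00 : z + (0:ℝ) • v = z := by simp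
  rw [h00]
  nlinarith [hmem]

theorem key_step {E : Type*} [NormedAddCommGroup E] [InnerProductSpace ℝ E]
    [CompleteSpace E] {S : Set E} (hS : Convex ℝ S) (h D1 f : E → ℝ)
    (L α c β : ℝ) (hL : 0 < L) (hf : Differentiable ℝ f)
    (hconv : ConvexOn ℝ S h) (hc : 0 < c) (hβ : 0 < β)
    (x z : E) (gv : E) (hx : x ∈ S) (hz : z ∈ S)
    (hmin : ∀ y ∈ S, ⟪z, gv⟫ + h z + (1 / β) * D1 z ≤ ⟪y, gv⟫ + h y + (1 / β) * D1 y)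
    (hdh : DifferentiableAt ℝ h z) (hdD : DifferentiableAt ℝ D1 z)
    (hangle : ⟪z - x, gradient D1 z⟫ ≥ α * ‖z - x‖ ^ 2)
    (hdescent : f z ≤ f x + ⟪gradient f x, z - x⟫ + L / 2 * ‖z - x‖ ^ 2) :
    ((α - 1 / (2 * c)) * β - (L / 2) * β ^ 2) * ‖(1 / β) • (x - z)‖ ^ 2 ≤
      (f x + h x) - (f z + h z) + (c * β / 2) * ‖gv - gradient f x‖ ^ 2 := by
  set v := x - z with hv
  set n := ‖z - x‖ ^ 2 with hn
  have hn0 : 0 ≤ n := by positivity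
  -- optimality: directional derivative ≥ 0
  have hinner : HasDerivAt (fun τ : ℝ => ⟪z + τ • v, gv⟫) ⟪v, gv⟫ 0 := by
    have heq : (fun τ : ℝ => ⟪z + τ • v, gv⟫) = fun τ : ℝ => ⟪z, gv⟫ + τ * ⟪v, gv⟫ := by
      funext τ; simp [inner_add_left, real_inner_smul_left]
    rw [heq]
    simpa using ((hasDerivAt_id (0:ℝ)).mul_const ⟪v, gv⟫).const_add ⟪z, gv⟫
  have hψ : HasDerivAt
      (fun τ : ℝ => ⟪z + τ • v, gv⟫ + h (z + τ • v) + (1 / β) * D1 (z + τ • v))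
      (⟪v, gv⟫ + ⟪gradient h z, v⟫ + (1 / β) * ⟪gradient D1 z, v⟫) 0 :=
    (hinner.add (comp_grad_hasDerivAt h z v hdh)).add
      ((comp_grad_hasDerivAt D1 z v hdD).const_mul (1 / β))
  have hline : ∀ τ : ℝ, z + τ • v = (1 - τ) • z + τ • x := by
    intro τ; rw [hv]; rw [smul_sub, sub_smul, one_smul]; abel
  have hopt : 0 ≤ ⟪v, gv⟫ + ⟪gradient h z, v⟫ + (1 / β) * ⟪gradient D1 z, v⟫ := by
    have := slope_le_aux _ _ 0 hψ.neg ?_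
    · linarith
    · intro τ hτ
      rw [div_le_iff₀ hτ.1]
      have hyS : z + τ • v ∈ S := by
        rw [hline τ]
        exact hS hz hx (by linarith [hτ.2]) hτ.1.le (by ring)
      have := hmin _ hyS
      have h00 : z + (0:ℝ) • v = z := by simp
      simp only [Pi.neg_apply, h00]
      linarith
  -- convexity of h
  have hcvx : ⟪gradient h z, v⟫ ≤ h x - h z := convex_grad_ineq h hconv x z hx hz hdh
  -- angle condition
  have hang : (1 / β) * ⟪gradient D1 z, v⟫ ≤ -(α / β) * n := by
    have hsym : ⟪gradient D1 z, v⟫ = -⟪z - x, gradient D1 z⟫ := by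
      rw [real_inner_comm, hv, ← inner_neg_left]; congr 1; abel
    rw [hsym, hn]
    have h1 : α * ‖z - x‖ ^ 2 ≤ ⟪z - x, gradient D1 z⟫ := hangle
    have hβ' : 0 < 1 / β := by positivity
    calc (1/β) * -⟪z - x, gradient D1 z⟫ ≤ (1/β) * -(α * ‖z-x‖^2) := by
          apply mul_le_mul_of_nonneg_left (by linarith) hβ'.le
      _ = -(α / β) * ‖z-x‖^2 := by ring
  -- decompose gradient f
  set δ := gv - gradient f x with hδ
  have hdecomp : ⟪gradient f x, z - x⟫ = -⟪v, gv⟫ + ⟪-δ, z - x⟫ := by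
    simp only [hδ, hv, neg_sub, inner_sub_left, inner_sub_right]
    rw [real_inner_comm x gv, real_inner_comm z gv]
    ring
  -- Young
  have hyoung : ⟪-δ, z - x⟫ ≤ (c * β / 2) * ‖δ‖ ^ 2 + (1 / (2 * (c * β))) * n := by
    set s := c * β with hs
    have hs0 : 0 < s := mul_pos hc hβ
    have h1 : ⟪-δ, z - x⟫ ≤ ‖δ‖ * ‖z - x‖ := by
      calc ⟪-δ, z - x⟫ ≤ ‖(-δ : E)‖ * ‖z - x‖ := real_inner_le_norm _ _
        _ = ‖δ‖ * ‖z - x‖ := by rw [norm_neg]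
    have h2 : ‖δ‖ * ‖z - x‖ ≤ s / 2 * ‖δ‖ ^ 2 + 1 / (2 * s) * ‖z - x‖ ^ 2 := by
      rw [← sub_nonneg]
      have h3 : s / 2 * ‖δ‖ ^ 2 + 1 / (2 * s) * ‖z - x‖ ^ 2 - ‖δ‖ * ‖z - x‖
          = (s * ‖δ‖ - ‖z - x‖) ^ 2 / (2 * s) := by
        field_simp; ring
      rw [h3]; positivity
    calc ⟪-δ, z - x⟫ ≤ s / 2 * ‖δ‖ ^ 2 + 1 / (2 * s) * ‖z - x‖ ^ 2 := le_trans h1 h2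
      _ = (c * β / 2) * ‖δ‖ ^ 2 + (1 / (2 * (c*β))) * n := by rw [hn, hs]
  -- norm identity
  have hGn : ‖(1 / β) • (x - z)‖ ^ 2 = (1 / β) ^ 2 * n := by
    rw [norm_smul, Real.norm_eq_abs, abs_of_pos (by positivity : (0:ℝ) < 1/β),
      mul_pow, hn, norm_sub_rev]
  rw [hGn]
  have hcoef : ((α - 1 / (2 * c)) * β - (L / 2) * β ^ 2) * (1 / β) ^ 2
      = α / β - 1 / (2 * (c * β)) - L / 2 := by
    field_simp
  have hfinal : (α / β - 1 / (2 * (c * β)) - L / 2) * n ≤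
      (f x + h x) - (f z + h z) + (c * β / 2) * ‖δ‖ ^ 2 := by
    nlinarith [hdescent, hopt, hcvx, hang, hdecomp, hyoung]
  calc ((α - 1/(2*c)) * β - (L/2) * β^2) * ((1/β)^2 * n)
      = (α / β - 1 / (2 * (c * β)) - L / 2) * n := by rw [← hcoef]; ring
    _ ≤ _ := hfinal
theorem descent_lemma {E : Type*} [NormedAddCommGroup E] [InnerProductSpace ℝ E]
    [CompleteSpace E]
    (f : E → ℝ) (L : ℝ) (hL : 0 < L) (hf : Differentiable ℝ f)
    (hlip : ∀ x y : E, ‖gradient f x - gradient f y‖ ≤ L * ‖x - y‖)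
    (x y : E) :
    f y ≤ f x + ⟪gradient f x, y - x⟫ + L / 2 * ‖y - x‖ ^ 2 := by
  set v := y - x with hv
  have hcurve : ∀ s : ℝ, HasDerivAt (fun τ : ℝ => x + τ • v) v s := by
    intro s; simpa using ((hasDerivAt_id s).smul_const v).const_add x
  have hgc : Continuous (gradient f) := by
    have : LipschitzWith (Real.toNNReal L) (gradient f) := by
      refine LipschitzWith.of_dist_le_mul fun a b => ?_
      rw [dist_eq_norm, dist_eq_norm]
      simpa [Real.coe_toNNReal L hL.le] using hlip a b
    exact this.continuous
  have hψ : ∀ s : ℝ, HasDerivAt (fun τ : ℝ => f (x + τ • v))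
      (⟪gradient f (x + s • v), v⟫) s := by
    intro s
    have h1 := ((hf (x + s • v)).hasGradientAt).hasFDerivAt
    have := h1.comp_hasDerivAt s (hcurve s)
    simp only [InnerProductSpace.toDual_apply_apply] at this
    exact this
  have hcont : Continuous fun s : ℝ => ⟪gradient f (x + s • v), v⟫ :=
    ((hgc.comp (by continuity)).inner continuous_const)
  have hftc : ∫ s in (0:ℝ)..1, ⟪gradient f (x + s • v), v⟫ = f y - f x := by
    have := intervalIntegral.integral_eq_sub_of_hasDerivAt
      (fun s _ => hψ s) (hcont.intervalIntegrable 0 1)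
    simpa [hv] using this
  have hbound : ∀ s ∈ Set.uIcc (0:ℝ) 1,
      ⟪gradient f (x + s • v), v⟫ ≤ ⟪gradient f x, v⟫ + L * s * ‖v‖ ^ 2 := by
    intro s hs
    have hs0 : 0 ≤ s := by
      rcases Set.mem_uIcc.1 hs with h | h
      · exact h.1
      · linarith [h.1, h.2]
    have h1 : ⟪gradient f (x + s • v) - gradient f x, v⟫ ≤ L * s * ‖v‖ ^ 2 := by
      calc ⟪gradient f (x + s • v) - gradient f x, v⟫
          ≤ ‖gradient f (x + s • v) - gradient f x‖ * ‖v‖ := real_inner_le_norm _ _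
        _ ≤ L * ‖(x + s • v) - x‖ * ‖v‖ := by
            have := hlip (x + s • v) x
            nlinarith [norm_nonneg v]
        _ = L * s * ‖v‖ ^ 2 := by
            simp [norm_smul, abs_of_nonneg hs0]; ring
    have := inner_sub_left (𝕜 := ℝ) (gradient f (x + s • v)) (gradient f x) v
    linarith [this ▸ h1]
  have hmono : ∫ s in (0:ℝ)..1, ⟪gradient f (x + s • v), v⟫ ≤
      ∫ s in (0:ℝ)..1, (⟪gradient f x, v⟫ + L * s * ‖v‖ ^ 2) := by
    apply intervalIntegral.integral_mono_on (by norm_num)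
      (hcont.intervalIntegrable 0 1) (by apply Continuous.intervalIntegrable; continuity)
    intro s hs
    exact hbound s (by simpa [Set.uIcc_of_le (by norm_num : (0:ℝ) ≤ 1)] using hs)
  have hval : ∫ s in (0:ℝ)..1, (⟪gradient f x, v⟫ + L * s * ‖v‖ ^ 2)
      = ⟪gradient f x, v⟫ + L / 2 * ‖v‖ ^ 2 := by
    rw [intervalIntegral.integral_add (by apply Continuous.intervalIntegrable; continuity)
      (by apply Continuous.intervalIntegrable; continuity)]
    rw [intervalIntegral.integral_const]
    have h3 : (fun s : ℝ => L * s * ‖v‖ ^ 2) = fun s : ℝ => (L * ‖v‖ ^ 2) * s :=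
      funext fun s => by ring
    rw [h3, intervalIntegral.integral_const_mul, integral_id]
    simp; ring
  linarith [hftc ▸ hmono, hval ▸ hmono]

/-- Convergence of stochastic proximal-gradient variational inference with varying
step sizes: with `α* := α − 1/(2c)`, `G_k := (λ_k − λ_{k+1})/β_k`,
`δ_k := g_k − ∇f(λ_k)`, `E[‖δ_k‖²] ≤ σ²/M_k`, and `C₀ := 𝓛* + f(λ₀) + h(λ₀)`,
`Σ_{k<t} (α*β_k − (L/2)β_k²)·E[‖G_k‖²] ≤ C₀ + (cσ²/2)·Σ_{k<t} β_k/M_k`. -/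
theorem stmt_5 {E : Type*} [NormedAddCommGroup E] [InnerProductSpace ℝ E]
    [FiniteDimensional ℝ E] [MeasurableSpace E] [BorelSpace E]
    {Ω : Type*} [MeasurableSpace Ω] (P : Measure Ω) [IsProbabilityMeasure P]
    (S : Set E) (hS : Convex ℝ S)
    (h : E → ℝ) (D : E → E → ℝ)
    (f : E → ℝ) (L : ℝ) (hL : 0 < L)
    (hf : Differentiable ℝ f)
    (hlip : ∀ x y : E, ‖gradient f x - gradient f y‖ ≤ L * ‖x - y‖)
    (hconv : ConvexOn ℝ S h)
    (α c σ : ℝ) (hα : 0 < α) (hc : 1 / (2 * α) < c) (hσ : 0 ≤ σ)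
    (t : ℕ) (ht : 1 ≤ t) (β M : ℕ → ℝ)
    (hM : ∀ k < t, 0 < M k)
    (hβpos : ∀ k < t, 0 < β k)
    (hβle : ∀ k < t, β k ≤ 2 * (α - 1 / (2 * c)) / L)
    (hstrict : ∃ k < t, β k < 2 * (α - 1 / (2 * c)) / L)
    (lam0 : E) (hlam0S : lam0 ∈ S)
    (lam : ℕ → Ω → E) (g : ℕ → Ω → E)
    (hlam0 : ∀ ω, lam 0 ω = lam0)
    (hmeas_lam : ∀ k, Measurable (lam k))
    (hmeas_g : ∀ k < t, Measurable (g k))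
    (hae : ∀ᵐ ω ∂P, ∀ k < t,
      lam (k + 1) ω ∈ S ∧
      (∀ y ∈ S,
        ⟪lam (k + 1) ω, g k ω⟫ + h (lam (k + 1) ω) +
            (1 / β k) * D (lam (k + 1) ω) (lam k ω) ≤
          ⟪y, g k ω⟫ + h y + (1 / β k) * D y (lam k ω)) ∧
      DifferentiableAt ℝ h (lam (k + 1) ω) ∧
      DifferentiableAt ℝ (fun x => D x (lam k ω)) (lam (k + 1) ω) ∧
      ⟪lam (k + 1) ω - lam k ω, gradient (fun x => D x (lam k ω)) (lam (k + 1) ω)⟫ ≥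
        α * ‖lam (k + 1) ω - lam k ω‖ ^ 2)
    (hδint : ∀ k < t, Integrable (fun ω => ‖g k ω - gradient f (lam k ω)‖ ^ 2) P)
    (hGint : ∀ k < t,
      Integrable (fun ω => ‖(1 / β k) • (lam k ω - lam (k + 1) ω)‖ ^ 2) P)
    (hδvar : ∀ k < t, ∫ ω, ‖g k ω - gradient f (lam k ω)‖ ^ 2 ∂P ≤ σ ^ 2 / M k)
    (Lstar : ℝ) (hLstar : ∀ x ∈ S, -(f x + h x) ≤ Lstar) :
    ∑ k ∈ Finset.range t, ((α - 1 / (2 * c)) * β k - (L / 2) * (β k) ^ 2) *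
        (∫ ω, ‖(1 / β k) • (lam k ω - lam (k + 1) ω)‖ ^ 2 ∂P) ≤
      (Lstar + f lam0 + h lam0) +
        (c * σ ^ 2 / 2) * ∑ k ∈ Finset.range t, β k / M k := by
  have hc0 : 0 < c := lt_trans (by positivity) hc
  set a : ℕ → ℝ := fun k => (α - 1 / (2 * c)) * β k - (L / 2) * (β k) ^ 2 with ha
  set C0 : ℝ := Lstar + f lam0 + h lam0 with hC0
  -- pointwise a.e. inequality
  have hptwise : ∀ᵐ ω ∂P,
      ∑ k ∈ Finset.range t, a k * ‖(1 / β k) • (lam k ω - lam (k + 1) ω)‖ ^ 2 ≤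
        C0 + ∑ k ∈ Finset.range t, (c * β k / 2) * ‖g k ω - gradient f (lam k ω)‖ ^ 2 := by
    filter_upwards [hae] with ω hω
    -- membership in S
    have hmem : ∀ k, k ≤ t → lam k ω ∈ S := by
      intro k
      induction k with
      | zero => intro _; rw [hlam0]; exact hlam0S
      | succ n ih => intro hn; exact (hω n (by omega)).1
    -- per-step inequality
    have hstep : ∀ k < t,
        a k * ‖(1 / β k) • (lam k ω - lam (k + 1) ω)‖ ^ 2 ≤
          ((f (lam k ω) + h (lam k ω)) - (f (lam (k + 1) ω) + h (lam (k + 1) ω))) +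
            (c * β k / 2) * ‖g k ω - gradient f (lam k ω)‖ ^ 2 := by
      intro k hk
      obtain ⟨hzS, hmin, hdh, hdD, hang⟩ := hω k hk
      exact key_step hS h (fun x => D x (lam k ω)) f L α c (β k) hL hf hconv hc0
        (hβpos k hk) (lam k ω) (lam (k + 1) ω) (g k ω) (hmem k (by omega)) hzS
        hmin hdh hdD hang
        (descent_lemma f L hL hf hlip (lam k ω) (lam (k + 1) ω))
    have hsum := Finset.sum_le_sum (fun k hk => hstep k (Finset.mem_range.1 hk))
    rw [Finset.sum_add_distrib, Finset.sum_range_sub'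
      (f := fun k => f (lam k ω) + h (lam k ω))] at hsum
    have hlast : -(f (lam t ω) + h (lam t ω)) ≤ Lstar := hLstar _ (hmem t le_rfl)
    rw [hlam0 ω] at hsum
    calc ∑ k ∈ Finset.range t, a k * ‖(1 / β k) • (lam k ω - lam (k + 1) ω)‖ ^ 2
        ≤ (f lam0 + h lam0 - (f (lam t ω) + h (lam t ω))) +
            ∑ k ∈ Finset.range t, (c * β k / 2) * ‖g k ω - gradient f (lam k ω)‖ ^ 2 := hsum
      _ ≤ C0 + ∑ k ∈ Finset.range t, (c * β k / 2) * ‖g k ω - gradient f (lam k ω)‖ ^ 2 := by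
          rw [hC0]; linarith
  -- integrate
  have hintL : Integrable (fun ω =>
      ∑ k ∈ Finset.range t, a k * ‖(1 / β k) • (lam k ω - lam (k + 1) ω)‖ ^ 2) P :=
    integrable_finset_sum _ fun k hk =>
      ((hGint k (Finset.mem_range.1 hk)).const_mul (a k))
  have hintR : Integrable (fun ω =>
      C0 + ∑ k ∈ Finset.range t, (c * β k / 2) * ‖g k ω - gradient f (lam k ω)‖ ^ 2) P :=
    (integrable_const C0).add (integrable_finset_sum _ fun k hk =>
      ((hδint k (Finset.mem_range.1 hk)).const_mul (c * β k / 2)))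
  have hint := integral_mono_ae hintL hintR hptwise
  rw [integral_finset_sum _ (fun k hk =>
      ((hGint k (Finset.mem_range.1 hk)).const_mul (a k))),
    integral_add (integrable_const C0) (integrable_finset_sum _ fun k hk =>
      ((hδint k (Finset.mem_range.1 hk)).const_mul (c * β k / 2))),
    integral_const,
    integral_finset_sum _ (fun k hk =>
      ((hδint k (Finset.mem_range.1 hk)).const_mul (c * β k / 2)))] at hint
  simp only [integral_const_mul, probReal_univ, ENNReal.toReal_one, smul_eq_mul, one_mul] at hint
  calc ∑ k ∈ Finset.range t, a k * (∫ ω, ‖(1 / β k) • (lam k ω - lam (k + 1) ω)‖ ^ 2 ∂P)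
      ≤ C0 + ∑ k ∈ Finset.range t,
          (c * β k / 2) * (∫ ω, ‖g k ω - gradient f (lam k ω)‖ ^ 2 ∂P) := hint
    _ ≤ C0 + ∑ k ∈ Finset.range t, (c * σ ^ 2 / 2) * (β k / M k) := by
        gcongr C0 + ∑ k ∈ Finset.range t, ?_ with k hk
        have hk' := Finset.mem_range.1 hk
        have h1 : (c * β k / 2) * (∫ ω, ‖g k ω - gradient f (lam k ω)‖ ^ 2 ∂P)
            ≤ (c * β k / 2) * (σ ^ 2 / M k) := by
          apply mul_le_mul_of_nonneg_left (hδvar k hk')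
          have hb := hβpos k hk'
          positivity
        calc (c * β k / 2) * (∫ ω, ‖g k ω - gradient f (lam k ω)‖ ^ 2 ∂P)
            ≤ (c * β k / 2) * (σ ^ 2 / M k) := h1
          _ = (c * σ ^ 2 / 2) * (β k / M k) := by ring
    _ = C0 + (c * σ ^ 2 / 2) * ∑ k ∈ Finset.range t, β k / M k := by
        rw [Finset.mul_sum]
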